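/- For the online budgeted matching problem without fractional last matching, with maximum bid-to-budget ratio κ ∈ (0,1], no deterministic online algorithm achieves a competitive ratio greater than 1 − κ. Concretely: for every deterministic algorithm and every ε > 0, there exists an instance with one offline node of budget 1 where the bids in the first V−1 rounds are equal and sum to 1 − κ + ε, and the last bid is either κ or 0, on which the algorithm's reward is at most (1 − κ + ε') times the offline optimum, with ε' → 0 as ε → 0 and the common bid → 0. -/

import Mathlib

open Classical

/-- Total reward of a deterministic online algorithm on a single offline node.
`alg hist w` decides, given the history of previously revealed bids and the
current bid `w`, whether to match the current query.  A match is only executed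
(earning reward `w` and consuming budget `w`) if the remaining budget suffices. -/
noncomputable def obmRun (alg : List ℝ → ℝ → Bool) : List ℝ → List ℝ → ℝ → ℝ
  | [], _, _ => 0
  | w :: ws, hist, b =>
    if alg hist w = true ∧ w ≤ b then
      w + obmRun alg ws (hist ++ [w]) (b - w)
    else
      obmRun alg ws (hist ++ [w]) b

/-- Offline optimal reward for a single offline node with budget `1`:
the largest total of any subset of the bids whose sum does not exceed `1`. -/
noncomputable def obmOpt (w : List ℝ) : ℝ :=
  sSup {r : ℝ | ∃ S : Finset ℕ, S ⊆ Finset.range w.length ∧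
    (∑ i ∈ S, w.getD i 0) ≤ 1 ∧ r = ∑ i ∈ S, w.getD i 0}

noncomputable def accS (alg : List ℝ → ℝ → Bool) (ω : ℝ) : ℕ → ℝ
  | 0 => 0
  | k+1 => if alg (List.replicate k ω) ω = true ∧ ω ≤ 1 - accS alg ω k
           then accS alg ω k + ω else accS alg ω k

lemma accS_succ_le (alg : List ℝ → ℝ → Bool) (ω : ℝ) (hω : 0 ≤ ω) (k : ℕ) :
    accS alg ω (k+1) ≤ accS alg ω k + ω := by
  rw [accS]; split_ifs <;> linarith

lemma accS_le_succ (alg : List ℝ → ℝ → Bool) (ω : ℝ) (hω : 0 ≤ ω) (k : ℕ) :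
    accS alg ω k ≤ accS alg ω (k+1) := by
  rw [accS]; split_ifs <;> linarith

lemma accS_le_mul (alg : List ℝ → ℝ → Bool) (ω : ℝ) (hω : 0 ≤ ω) :
    ∀ k, accS alg ω k ≤ k * ω := by
  intro k
  induction k with
  | zero => simp [accS]
  | succ k ih =>
    have h := accS_succ_le alg ω hω k
    push_cast
    nlinarith

lemma run_split (alg : List ℝ → ℝ → Bool) (ω : ℝ) (rest : List ℝ) :
    ∀ m k, obmRun alg (List.replicate m ω ++ rest) (List.replicate k ω) (1 - accS alg ω k)
      = (accS alg ω (k+m) - accS alg ω k)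
        + obmRun alg rest (List.replicate (k+m) ω) (1 - accS alg ω (k+m)) := by
  intro m
  induction m with
  | zero => intro k; simp
  | succ m ih =>
    intro k
    rw [List.replicate_succ, List.cons_append]
    have hrep : List.replicate k ω ++ [ω] = List.replicate (k+1) ω := by
      rw [List.replicate_succ' ]
    rw [obmRun]
    by_cases h : alg (List.replicate k ω) ω = true ∧ ω ≤ 1 - accS alg ω k
    · rw [if_pos h]
      have hS : accS alg ω (k+1) = accS alg ω k + ω := by rw [accS, if_pos h]
      have hb : 1 - accS alg ω k - ω = 1 - accS alg ω (k+1) := by rw [hS]; ring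
      have hadd : k + 1 + m = k + (m+1) := by omega
      rw [hrep, hb, ih (k+1), hadd, hS]
      ring
    · rw [if_neg h]
      have hS : accS alg ω (k+1) = accS alg ω k := by rw [accS, if_neg h]
      have hb : 1 - accS alg ω k = 1 - accS alg ω (k+1) := by rw [hS]
      have hadd : k + 1 + m = k + (m+1) := by omega
      rw [hrep, hb, ih (k+1), hadd, hS]

lemma run_eval (alg : List ℝ → ℝ → Bool) (ω c : ℝ) (n : ℕ) :
    obmRun alg (List.replicate n ω ++ [c]) [] 1 =
      accS alg ω n
        + (if alg (List.replicate n ω) c = true ∧ c ≤ 1 - accS alg ω n then c else 0) := by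
  have h := run_split alg ω [c] n 0
  simp only [List.replicate_zero, Nat.zero_add, accS] at h
  rw [show (1:ℝ) - 0 = 1 by ring] at h
  rw [h, obmRun]
  split_ifs with h1
  · rw [obmRun]; ring
  · rw [obmRun]; ring

lemma opt_ge (w : List ℝ) (S : Finset ℕ) (hsub : S ⊆ Finset.range w.length)
    (hle : (∑ i ∈ S, w.getD i 0) ≤ 1) : (∑ i ∈ S, w.getD i 0) ≤ obmOpt w := by
  apply le_csSup
  · exact ⟨1, fun r hr => by obtain ⟨T, _, h1, h2⟩ := hr; rw [h2]; exact h1⟩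
  · exact ⟨S, hsub, hle, rfl⟩

lemma getD_inst_lt (n i : ℕ) (ω c : ℝ) (h : i < n) :
    (List.replicate n ω ++ [c]).getD i 0 = ω := by
  rw [List.getD_append _ _ _ _ (by simpa using h), List.getD_eq_getElem _ _ (by simpa using h)]
  simp

lemma getD_inst_last (n : ℕ) (ω c : ℝ) :
    (List.replicate n ω ++ [c]).getD n 0 = c := by
  rw [List.getD_append_right _ _ _ _ (by simp)]
  simp

lemma sum_range_getD (n j : ℕ) (ω c : ℝ) (h : j ≤ n) :
    ∑ i ∈ Finset.range j, (List.replicate n ω ++ [c]).getD i 0 = j * ω := by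
  rw [Finset.sum_congr rfl (fun i hi => getD_inst_lt n i ω c (lt_of_lt_of_le (Finset.mem_range.mp hi) h))]
  simp [mul_comm]

/-- Upper bound `1 - κ` on the competitive ratio of any deterministic online
algorithm for OBM without FLM, for bid-budget ratio `κ ∈ (0,1]`: for every
deterministic algorithm and every `δ > 0` there is an instance with one offline
node of budget `1`, all bids in `[0, κ]`, consisting of `V - 1` equal bids `ω`
summing to `1 - κ + ε` (for some small `ε > 0`) followed by one final bid equal
to `κ` or `0`, on which the algorithm earns at most `(1 - κ + δ)` times the
offline optimum (which is positive). -/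
theorem obm_no_flm_competitive_ratio_upper_bound
    (κ : ℝ) (hκ0 : 0 < κ) (hκ1 : κ ≤ 1)
    (alg : List ℝ → ℝ → Bool) (δ : ℝ) (hδ : 0 < δ) :
    ∃ (V : ℕ) (ω ε last : ℝ) (w : List ℝ),
      1 ≤ V ∧ 0 < ε ∧ 0 < ω ∧
      w = List.replicate (V - 1) ω ++ [last] ∧
      (last = κ ∨ last = 0) ∧
      ((V : ℝ) - 1) * ω = 1 - κ + ε ∧
      (∀ b ∈ w, 0 ≤ b ∧ b ≤ κ) ∧
      0 < obmOpt w ∧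
      obmRun alg w [] 1 ≤ (1 - κ + δ) * obmOpt w := by
  set ω : ℝ := min (min κ δ) 1 / 4 with hωdef
  have h4 : 4 * ω = min (min κ δ) 1 := by rw [hωdef]; ring
  have hω4κ : 4 * ω ≤ κ := by
    rw [h4]; exact le_trans (min_le_left _ _) (min_le_left _ _)
  have hω4δ : 4 * ω ≤ δ := by
    rw [h4]; exact le_trans (min_le_left _ _) (min_le_right _ _)
  have hω41 : 4 * ω ≤ 1 := by rw [h4]; exact min_le_right _ _
  have hω0 : 0 < ω := by
    have h0 : 0 < min (min κ δ) 1 := lt_min (lt_min hκ0 hδ) one_pos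
    linarith [h4]
  have hωκ : ω ≤ κ := by linarith
  have hkey : 1 - κ + ω ≤ (1 - κ + δ) * (1 - ω) := by
    nlinarith [mul_nonneg hκ0.le hω0.le, mul_nonneg hδ.le (show (0:ℝ) ≤ 1 - 4*ω by linarith)]
  by_cases hT : ∃ t, 1 - κ < accS alg ω t
  · -- Case A: algorithm's accepted amount eventually exceeds 1 - κ; end with bid κ.
    set T := Nat.find hT with hTdef
    have hT1 : 1 - κ < accS alg ω T := Nat.find_spec hT
    have hTpos : T ≠ 0 := by
      intro h
      rw [h] at hT1
      simp only [accS] at hT1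
      linarith
    have hTprev : ¬ (1 - κ < accS alg ω (T-1)) := Nat.find_min hT (by omega)
    push_neg at hTprev
    have hsucc : T - 1 + 1 = T := by omega
    have hST : accS alg ω T ≤ 1 - κ + ω := by
      have h := accS_succ_le alg ω hω0.le (T-1)
      rw [hsucc] at h
      linarith
    have hTω : 1 - κ < (T:ℝ) * ω := lt_of_lt_of_le hT1 (accS_le_mul alg ω hω0.le T)
    set w : List ℝ := List.replicate T ω ++ [κ] with hwdef
    set j := ⌊(1-κ)/ω⌋₊ with hjdef
    have hj1 : (j:ℝ) * ω ≤ 1 - κ := by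
      have h := Nat.floor_le (div_nonneg (show (0:ℝ) ≤ 1 - κ by linarith) hω0.le)
      calc (j:ℝ) * ω ≤ ((1-κ)/ω) * ω := mul_le_mul_of_nonneg_right h hω0.le
        _ = 1 - κ := div_mul_cancel₀ _ (ne_of_gt hω0)
    have hj2 : 1 - κ < ((j:ℝ) + 1) * ω := by
      have h := Nat.lt_floor_add_one ((1-κ)/ω)
      have := (div_lt_iff₀ hω0).mp h
      linarith
    have hjT : j < T := by
      have hc : (j:ℝ) * ω < (T:ℝ) * ω := lt_of_le_of_lt hj1 hTω
      exact_mod_cast (mul_lt_mul_iff_left₀ hω0).mp hc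
    have hlen : w.length = T + 1 := by simp [hwdef]
    have hnotmem : T ∉ Finset.range j := by simp; omega
    have hsum : ∑ i ∈ insert T (Finset.range j), w.getD i 0 = κ + (j:ℝ) * ω := by
      rw [Finset.sum_insert hnotmem, hwdef, getD_inst_last,
        sum_range_getD T j ω κ (le_of_lt hjT)]
    have hsub : insert T (Finset.range j) ⊆ Finset.range w.length := by
      rw [hlen]
      intro x hx
      simp only [Finset.mem_insert, Finset.mem_range] at hx ⊢
      rcases hx with h | h
      · omega
      · omega
    have hOPT : 1 - ω ≤ obmOpt w := by
      have h := opt_ge w _ hsub (by rw [hsum]; linarith)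
      rw [hsum] at h
      linarith
    refine ⟨T+1, ω, (T:ℝ)*ω - (1-κ), κ, w, by omega, by linarith, hω0, by simp [hwdef], Or.inl rfl, by push_cast; ring, ?_, by linarith, ?_⟩
    · intro b hb
      rw [hwdef] at hb
      rcases List.mem_append.mp hb with h | h
      · rw [List.eq_of_mem_replicate h]
        exact ⟨hω0.le, hωκ⟩
      · simp only [List.mem_singleton] at h
        rw [h]
        exact ⟨hκ0.le, le_refl _⟩
    · rw [hwdef, run_eval]
      have hcond : ¬ (alg (List.replicate T ω) κ = true ∧ κ ≤ 1 - accS alg ω T) := by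
        rintro ⟨-, hc⟩; linarith
      rw [if_neg hcond, add_zero]
      have hmul : (1 - κ + δ) * (1 - ω) ≤ (1 - κ + δ) * obmOpt w :=
        mul_le_mul_of_nonneg_left hOPT (by linarith)
      rw [hwdef] at hmul
      linarith
  · -- Case B: the accepted amount never exceeds 1 - κ; end with bid 0.
    push_neg at hT
    set M := ⌈1/ω⌉₊ with hMdef
    have hM : 1 ≤ (M:ℝ) * ω := by
      have h := Nat.le_ceil (1/ω)
      calc (1:ℝ) = (1/ω) * ω := (div_mul_cancel₀ 1 (ne_of_gt hω0)).symm
        _ ≤ (M:ℝ) * ω := mul_le_mul_of_nonneg_right h hω0.le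
    set w : List ℝ := List.replicate M ω ++ [(0:ℝ)] with hwdef
    set j := ⌊1/ω⌋₊ with hjdef
    have hj1 : (j:ℝ) * ω ≤ 1 := by
      have h := Nat.floor_le (le_of_lt (div_pos one_pos hω0))
      calc (j:ℝ) * ω ≤ (1/ω) * ω := mul_le_mul_of_nonneg_right h hω0.le
        _ = 1 := div_mul_cancel₀ 1 (ne_of_gt hω0)
    have hj2 : 1 < ((j:ℝ) + 1) * ω := by
      have h := Nat.lt_floor_add_one (1/ω)
      have := (div_lt_iff₀ hω0).mp h
      linarith
    have hjM : j ≤ M := by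
      by_contra hc
      push_neg at hc
      have : (M:ℝ) * ω < (j:ℝ) * ω :=
        (mul_lt_mul_iff_left₀ hω0).mpr (by exact_mod_cast hc)
      linarith
    have hlen : w.length = M + 1 := by simp [hwdef]
    have hsum : ∑ i ∈ Finset.range j, w.getD i 0 = (j:ℝ) * ω := by
      rw [hwdef, sum_range_getD M j ω 0 hjM]
    have hsub : Finset.range j ⊆ Finset.range w.length := by
      rw [hlen]
      exact Finset.range_subset_range.mpr (by omega)
    have hOPT : 1 - ω ≤ obmOpt w := by
      have h := opt_ge w _ hsub (by rw [hsum]; exact hj1)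
      rw [hsum] at h
      linarith
    refine ⟨M+1, ω, (M:ℝ)*ω - (1-κ), 0, w, by omega, by linarith, hω0, by simp [hwdef], Or.inr rfl, by push_cast; ring, ?_, by linarith, ?_⟩
    · intro b hb
      rw [hwdef] at hb
      rcases List.mem_append.mp hb with h | h
      · rw [List.eq_of_mem_replicate h]
        exact ⟨hω0.le, hωκ⟩
      · simp only [List.mem_singleton] at h
        rw [h]
        exact ⟨le_refl _, hκ0.le⟩
    · rw [hwdef, run_eval, ite_self, add_zero]
      have hmul : (1 - κ + δ) * (1 - ω) ≤ (1 - κ + δ) * obmOpt w :=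
        mul_le_mul_of_nonneg_left hOPT (by linarith)
      rw [hwdef] at hmul
      have := hT M
      linarith
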